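/- For any finite set X of species, any function ε : X → ℝ, any x ∈ X, and ANY function φ : 2^X → ℝ, the generalized HEDGE score factorizes as ψ'_x = ψ_x · ε_x, where ψ_x is the g-FOB-weighted expectation of Δ_φ(S_x, x) = φ(S_x ∪ {x}) − φ(S_x) and ψ'_x is the g-FOB-weighted expectation of Δ'_φ(S_x, x) = φ(S_x ∪ {x}) − φ(S_x ∪ I_x). -/
import Mathlib

open Finset

/-- g-FOB weight of the survivor set `S ⊆ X \ {x}`:
each species `y ≠ x` independently survives with probability `1 - ε y`. -/
noncomputable def gfobWeight {X : Type*} [Fintype X] [DecidableEq X]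
    (ε : X → ℝ) (x : X) (S : Finset X) : ℝ :=
  (∏ y ∈ S, (1 - ε y)) * ∏ y ∈ Finset.univ.erase x \ S, ε y

/-- generalized HED score `ψ_x`: the g-FOB expectation of
`Δ_φ(S, x) = φ(S ∪ {x}) - φ(S)`. -/
noncomputable def psi {X : Type*} [Fintype X] [DecidableEq X]
    (ε : X → ℝ) (φ : Finset X → ℝ) (x : X) : ℝ :=
  ∑ S ∈ (Finset.univ.erase x).powerset,
    gfobWeight ε x S * (φ (S ∪ {x}) - φ S)

/-- generalized HEDGE score `ψ'_x`: the expectation of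
`Δ'_φ(S, x) = φ(S ∪ {x}) - φ(S ∪ I_x)`, averaging also over the fate `I_x` of `x`
(`I_x = {x}` with probability `1 - ε x`, `I_x = ∅` with probability `ε x`). -/
noncomputable def psi' {X : Type*} [Fintype X] [DecidableEq X]
    (ε : X → ℝ) (φ : Finset X → ℝ) (x : X) : ℝ :=
  ∑ S ∈ (Finset.univ.erase x).powerset,
    gfobWeight ε x S *
      ((1 - ε x) * (φ (S ∪ {x}) - φ (S ∪ {x})) +
        ε x * (φ (S ∪ {x}) - φ (S ∪ ∅)))

/-- Proposition 1(i): for ANY `φ : 2^X → ℝ`, under the g-FOB model the generalized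
HEDGE score factorizes as `ψ'_x = ψ_x · ε_x`. -/
theorem hedge_eq_hed_mul_extinction {X : Type*} [Fintype X] [DecidableEq X]
    (ε : X → ℝ) (x : X) (φ : Finset X → ℝ) :
    psi' ε φ x = psi ε φ x * ε x := by
  simp only [psi', psi, Finset.union_empty, sub_self, mul_zero, zero_add,
    Finset.sum_mul]
  apply Finset.sum_congr rfl
  intro S _
  ring
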